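/- Let F be a linearly ordered field, A a magnitude of F, a ∈ F, and suppose the coset α = a + A is zeroless (0 ∉ a + A). Then the set of inverses of elements of α is again a coset, namely {x⁻¹ | x ∈ a + A} = {a⁻¹} + (a⁻¹·a⁻¹) • A (the formula 1/α = 1/a + A/a²). -/

import Mathlib

open Pointwise

/-- A *magnitude* of a linearly ordered field `F` is an order-convex additive subgroup of `F`,
given as a set: it contains `0`, is closed under addition and negation, and is order-convex. -/
def IsMagnitude {F : Type*} [Field F] [LinearOrder F] [IsStrictOrderedRing F] (A : Set F) : Prop :=
  (0 : F) ∈ A ∧ (∀ x ∈ A, ∀ y ∈ A, x + y ∈ A) ∧ (∀ x ∈ A, -x ∈ A) ∧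
    (∀ x ∈ A, ∀ y ∈ A, ∀ z : F, x ≤ z → z ≤ y → z ∈ A)

/-- Order relation on subsets of `F`: `S ≤ T` iff every element of `S` is below some element of `T`. -/
def SetLE {F : Type*} [Field F] [LinearOrder F] [IsStrictOrderedRing F] (S T : Set F) : Prop :=
  ∀ x ∈ S, ∃ y ∈ T, x ≤ y

theorem coset_inv_formula {F : Type*} [Field F] [LinearOrder F] [IsStrictOrderedRing F]
    (A : Set F) (hA : IsMagnitude A) (a : F) (hzl : (0 : F) ∉ ({a} + A)) :
    (fun x => x⁻¹) '' ({a} + A) = {a⁻¹} + (a⁻¹ * a⁻¹) • A := by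
  obtain ⟨h0, hadd, hneg, hconv⟩ := hA
  have hmem : ∀ d ∈ A, a + d ∈ ({a} + A : Set F) := fun d hd =>
    ⟨a, rfl, d, hd, rfl⟩
  have hne : ∀ d ∈ A, a + d ≠ 0 := by
    intro d hd h
    exact hzl (h ▸ hmem d hd)
  have ha : a ≠ 0 := by
    have := hne 0 h0
    simpa using this
  have habs : ∀ d ∈ A, |d| ∈ A := by
    intro d hd
    rcases abs_choice d with h | h
    · rwa [h]
    · rw [h]; exact hneg d hd
  have key : ∀ d ∈ A, 2 * |d| < |a| := by
    intro d hd
    by_contra hle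
    push_neg at hle
    have h2 : |d| + |d| ∈ A := hadd _ (habs d hd) _ (habs d hd)
    have hna : -a ∈ A := by
      refine hconv _ (hneg _ h2) _ h2 (-a) ?_ ?_
      · have hb : |(-a)| ≤ |d| + |d| := by rw [abs_neg]; linarith
        linarith [(abs_le.mp hb).1]
      · have hb : |(-a)| ≤ |d| + |d| := by rw [abs_neg]; linarith
        exact (abs_le.mp hb).2
    exact hzl ⟨a, rfl, -a, hna, by ring⟩
  have hhalf : ∀ d ∈ A, |a| ≤ 2 * |a + d| := by
    intro d hd
    have h1 : |a| - |d| ≤ |a + d| := by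
      have := abs_sub_abs_le_abs_sub a (-d)
      simp only [sub_neg_eq_add, abs_neg] at this
      linarith
    linarith [key d hd]
  -- main correction-term lemma: for d ∈ A, -(a*d)/(a+d) ∈ A
  have hcorr : ∀ d ∈ A, -(a * d) / (a + d) ∈ A := by
    intro d hd
    set e := -(a * d) / (a + d) with hedef
    have hxne := hne d hd
    have hxpos : (0 : F) < |a + d| := abs_pos.mpr hxne
    have hEq : |e| * |a + d| = |a| * |d| := by
      rw [hedef, abs_div, abs_neg, abs_mul, div_mul_cancel₀]
      exact ne_of_gt hxpos
    have hle : |e| ≤ |d| + |d| := by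
      nlinarith [hhalf d hd, abs_nonneg d, abs_nonneg e]
    have h2 : |d| + |d| ∈ A := hadd _ (habs d hd) _ (habs d hd)
    refine hconv _ (hneg _ h2) _ h2 e ?_ ?_
    · linarith [(abs_le.mp hle).1]
    · exact (abs_le.mp hle).2
  ext y
  simp only [Set.mem_image]
  constructor
  · rintro ⟨x, ⟨a', ha', d, hd, rfl⟩, rfl⟩
    simp only [Set.mem_singleton_iff] at ha'
    obtain rfl := ha'.symm
    refine ⟨a⁻¹, rfl, a⁻¹ * a⁻¹ * (-(a * d) / (a + d)), ⟨_, hcorr d hd, rfl⟩, ?_⟩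
    have hxne := hne d hd
    show a⁻¹ + a⁻¹ * a⁻¹ * (-(a * d) / (a + d)) = (a + d)⁻¹
    rw [eq_comm]
    field_simp
    ring
  · rintro ⟨b, hb, z, ⟨e, he, rfl⟩, rfl⟩
    simp only [Set.mem_singleton_iff] at hb
    obtain rfl := hb.symm
    have hene := hne e he
    set d := -(a * e) / (a + e) with hddef
    have hd : d ∈ A := hcorr e he
    refine ⟨a + d, hmem d hd, ?_⟩
    have hadne := hne d hd
    show (a + d)⁻¹ = a⁻¹ + (a⁻¹ * a⁻¹) • e
    rw [smul_eq_mul, eq_comm]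
    refine eq_inv_of_mul_eq_one_right ?_
    rw [hddef]
    field_simp
    ring
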